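/- arXiv:1010.2604 — 3 statements merged into one kernel-verified Lean document; each statement's English description precedes it below -/
import Mathlib

section
/- For pres e1, e2: L_p(e1 ⊙ e2) = L_p(e1)·L(|e2|) ∪ L_p(e2), where ⊙ is the lifted concatenation. -/
namespace PointedRE

inductive PItem (α : Type) : Type
  | empty : PItem α
  | eps : PItem α
  | ch : α → PItem α
  | pch : α → PItem α
  | plus : PItem α → PItem α → PItem α
  | cat : PItem α → PItem α → PItem α
  | star : PItem α → PItem α

namespace PItem

variable {α : Type}

/-- The carrier: erase all points. -/
def carrier : PItem α → RegularExpression α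
  | empty => 0
  | eps => 1
  | ch a => RegularExpression.char a
  | pch a => RegularExpression.char a
  | plus e1 e2 => carrier e1 + carrier e2
  | cat e1 e2 => carrier e1 * carrier e2
  | star e => (carrier e).star

/-- ε(b) : {ε} if b, ∅ otherwise. -/
def ebool (b : Bool) : Language α := if b then 1 else 0

/-- The pointed language of a pointed item. -/
def Lp : PItem α → Language α
  | empty => 0
  | eps => 0
  | ch _ => 0
  | pch a => {[a]}
  | plus e1 e2 => Lp e1 + Lp e2
  | cat e1 e2 => Lp e1 * (carrier e2).matches' + Lp e2
  | star e => Lp e * KStar.kstar (carrier e).matches'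

/-- A pointed regular expression (pre): a pointed item with a trailing boolean. -/
abbrev Pre (α : Type) := PItem α × Bool

/-- The pointed language of a pre. -/
def LpP (p : Pre α) : Language α := Lp p.1 + ebool p.2

/-- Broadcasting a point inside a pointed item. -/
def broadcast : PItem α → Pre α
  | empty => (empty, false)
  | eps => (eps, true)
  | ch a => (pch a, false)
  | pch a => (pch a, false)
  | plus e1 e2 =>
      (plus (broadcast e1).1 (broadcast e2).1, (broadcast e1).2 || (broadcast e2).2)
  | cat e1 e2 =>
      if (broadcast e1).2 then
        (cat (broadcast e1).1 (broadcast e2).1, (broadcast e2).2)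
      else (cat (broadcast e1).1 e2, false)
  | star e => (star (broadcast e).1, true)

/-- Lifted sum on pres. -/
def oplus (p1 p2 : Pre α) : Pre α := (plus p1.1 p2.1, p1.2 || p2.2)

/-- Lifted concatenation on pres. -/
def odot (p1 p2 : Pre α) : Pre α :=
  if p1.2 then (cat p1.1 (broadcast p2.1).1, p2.2 || (broadcast p2.1).2)
  else (cat p1.1 p2.1, p2.2)

/-- Lifted Kleene star on pres. -/
def ostar (p : Pre α) : Pre α :=
  if p.2 then (star (broadcast p.1).1, true) else (star p.1, false)

/-- Broadcasting extended to pres. -/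
def broadcastP (p : Pre α) : Pre α :=
  ((broadcast p.1).1, p.2 || (broadcast p.1).2)

/-- The move operation on pointed items. -/
def move [DecidableEq α] (a : α) : PItem α → Pre α
  | empty => (empty, false)
  | eps => (eps, false)
  | ch b => (ch b, false)
  | pch b => if b = a then (ch b, true) else (ch b, false)
  | plus e1 e2 => oplus (move a e1) (move a e2)
  | cat e1 e2 => odot (move a e1) (move a e2)
  | star e => ostar (move a e)

/-- The move operation iterated along a string (on pres, ignoring the trailing point). -/
def moves [DecidableEq α] : Pre α → List α → Pre α
  | p, [] => p
  | p, a :: w => moves (move a p.1) w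

/-- Embedding of regular expressions as point-free pointed items. -/
def embed : RegularExpression α → PItem α
  | .zero => empty
  | .epsilon => eps
  | .char a => ch a
  | .plus e1 e2 => plus (embed e1) (embed e2)
  | .comp e1 e2 => cat (embed e1) (embed e2)
  | .star e => star (embed e)

/-- Read-back of a pointed item as a set of regular expressions. -/
def R : PItem α → Set (RegularExpression α)
  | empty => ∅
  | eps => ∅
  | ch _ => ∅
  | pch a => {RegularExpression.char a}
  | plus e1 e2 => R e1 ∪ R e2
  | cat e1 e2 => (fun r => r * carrier e2) '' R e1 ∪ R e2
  | star e => (fun r => r * (carrier e).star) '' R e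

/-- Read-back of a pre. -/
def RP (p : Pre α) : Set (RegularExpression α) :=
  R p.1 ∪ (if p.2 then {1} else ∅)

/-- The language of a set of regular expressions. -/
def LS (S : Set (RegularExpression α)) : Language α :=
  {w | ∃ r ∈ S, w ∈ r.matches'}

/-- The look-ahead normal form of a regular expression (without ε). -/
def nf : RegularExpression α → Set (RegularExpression α)
  | .zero => ∅
  | .epsilon => ∅
  | .char a => {RegularExpression.char a}
  | .plus e1 e2 => nf e1 ∪ nf e2
  | .comp e1 e2 =>
      if e1.matchEpsilon then (fun r => r * e2) '' nf e1 ∪ nf e2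
      else (fun r => r * e2) '' nf e1
  | .star e => (fun r => r * e.star) '' nf e

/-- The look-ahead normal form with ε added when the expression is nullable. -/
def nfe (e : RegularExpression α) : Set (RegularExpression α) :=
  nf e ∪ (if e.matchEpsilon then {1} else ∅)

/-- nf_ε lifted to sets of regular expressions. -/
def nfeS (S : Set (RegularExpression α)) : Set (RegularExpression α) :=
  ⋃ r ∈ S, nfe r

/-- Merge of two pointed items (meaningful when they share the same carrier). -/
def merge : PItem α → PItem α → PItem α
  | ch a, pch _ => pch a
  | plus e1 e2, plus f1 f2 => plus (merge e1 f1) (merge e2 f2)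
  | cat e1 e2, cat f1 f2 => cat (merge e1 f1) (merge e2 f2)
  | star e, star f => star (merge e f)
  | e, _ => e

/-- Merge extended to pres. -/
def mergeP (p q : Pre α) : Pre α := (merge p.1 q.1, p.2 || q.2)

end PItem
end PointedRE

open PointedRE PItem

section Aux
open PointedRE PItem RegularExpression

variable {α : Type}

lemma carrier_broadcast (e : PItem α) : carrier (broadcast e).1 = carrier e := by
  induction e with
  | empty => rfl
  | eps => rfl
  | ch a => rfl
  | pch a => rfl
  | plus e1 e2 ih1 ih2 => simp [broadcast, carrier, ih1, ih2]
  | cat e1 e2 ih1 ih2 =>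
      by_cases h : (broadcast e1).2 <;> simp [broadcast, h, carrier, ih1, ih2]
  | star e ih => simp [broadcast, carrier, ih]

lemma ebool_or (a b : Bool) : (ebool (a || b) : Language α) = ebool a + ebool b := by
  cases a <;> cases b <;> simp [ebool, Language.add_self]

lemma kstar_aux {l m : Language α} (h : l ≤ m + 1) : KStar.kstar l ≤ m * KStar.kstar l + 1 := by
  intro w hw
  rw [Language.kstar_def_nonempty] at hw
  obtain ⟨S, rfl, hS⟩ := hw
  cases S with
  | nil => exact Or.inr rfl
  | cons y t =>
      left
      have hy := hS y (by simp)
      have hym : y ∈ m := by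
        rcases h hy.1 with h' | h'
        · exact h'
        · exact absurd ((Language.mem_one _).mp h') hy.2
      have ht : t.flatten ∈ (KStar.kstar l : Language α) :=
        Language.join_mem_kstar fun z hz => (hS z (by simp [hz])).1
      exact Language.append_mem_mul hym ht

lemma lp_broadcast (e : PItem α) :
    Lp (broadcast e).1 + ebool (broadcast e).2 = (carrier e).matches' + Lp e := by
  induction e with
  | empty => simp [broadcast, Lp, carrier, ebool, matches'_zero]
  | eps => simp [broadcast, Lp, carrier, ebool, matches'_epsilon, add_comm]
  | ch a => simp [broadcast, Lp, carrier, ebool, matches'_char]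
  | pch a => simp [broadcast, Lp, carrier, ebool, matches'_char, Language.add_self]
  | plus e1 e2 ih1 ih2 =>
      simp only [broadcast, Lp, carrier, matches'_add, ebool_or]
      rw [add_add_add_comm, ih1, ih2, add_add_add_comm]
  | cat e1 e2 ih1 ih2 =>
      by_cases h : (broadcast e1).2
      · have h1 : Lp (broadcast e1).1 + 1 = (carrier e1).matches' + Lp e1 := by
          simpa [h, ebool] using ih1
        simp only [broadcast, h, if_true, Lp, carrier_broadcast, carrier, matches'_mul]
        calc Lp (broadcast e1).1 * (carrier e2).matches'
              + Lp (broadcast e2).1 + ebool (broadcast e2).2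
            = Lp (broadcast e1).1 * (carrier e2).matches'
              + ((carrier e2).matches' + Lp e2) := by rw [add_assoc, ih2]
          _ = (Lp (broadcast e1).1 * (carrier e2).matches'
              + 1 * (carrier e2).matches') + Lp e2 := by rw [one_mul, ← add_assoc]
          _ = ((carrier e1).matches' * (carrier e2).matches'
              + Lp e1 * (carrier e2).matches') + Lp e2 := by
                rw [← add_mul, h1, add_mul]
          _ = (carrier e1).matches' * (carrier e2).matches'
              + (Lp e1 * (carrier e2).matches' + Lp e2) := by rw [add_assoc]
      · have h1 : Lp (broadcast e1).1 = (carrier e1).matches' + Lp e1 := by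
          simpa [h, ebool] using ih1
        simp only [broadcast, h, if_false, Lp, carrier, matches'_mul, ebool,
          Bool.false_eq_true, add_zero]
        rw [h1, add_mul, add_assoc]
  | star e ih =>
      simp only [broadcast, Lp, carrier, carrier_broadcast, matches', ebool, if_true]
      set M := (carrier e).matches' with hM
      by_cases h : (broadcast e).2
      · have h1 : Lp (broadcast e).1 + 1 = M + Lp e := by simpa [h, ebool] using ih
        have h2 : Lp (broadcast e).1 * KStar.kstar M + KStar.kstar M = M * KStar.kstar M + Lp e * KStar.kstar M := by
          have := congrArg (· * KStar.kstar M) h1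
          simpa [add_mul] using this
        have hle : M ≤ Lp (broadcast e).1 + 1 := by
          rw [h1, add_eq_sup]; exact le_sup_left
        have h3 : KStar.kstar M ≤ Lp (broadcast e).1 * KStar.kstar M + 1 := kstar_aux hle
        calc Lp (broadcast e).1 * KStar.kstar M + 1
            = (Lp (broadcast e).1 * KStar.kstar M + 1) ⊔ KStar.kstar M := (sup_eq_left.mpr h3).symm
          _ = Lp (broadcast e).1 * KStar.kstar M + 1 + KStar.kstar M := by rw [← add_eq_sup]
          _ = (Lp (broadcast e).1 * KStar.kstar M + KStar.kstar M) + 1 := by rw [add_right_comm]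
          _ = (M * KStar.kstar M + Lp e * KStar.kstar M) + 1 := by rw [h2]
          _ = (1 + M * KStar.kstar M) + Lp e * KStar.kstar M := by
                rw [add_comm (M * KStar.kstar M + Lp e * KStar.kstar M) 1, ← add_assoc]
          _ = KStar.kstar M + Lp e * KStar.kstar M := by rw [Language.one_add_self_mul_kstar_eq_kstar]
      · have h1 : Lp (broadcast e).1 = M + Lp e := by simpa [h, ebool] using ih
        rw [h1, add_mul, add_comm (M * KStar.kstar M) (Lp e * KStar.kstar M),
          add_assoc, add_comm (M * KStar.kstar M) 1,
          Language.one_add_self_mul_kstar_eq_kstar, add_comm]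

end Aux

/-- L_p(e1 ⊙ e2) = L_p(e1)·L(|e2|) ∪ L_p(e2). -/
theorem stmt4 {α : Type} (p1 p2 : Pre α) :
    LpP (odot p1 p2) = LpP p1 * (carrier p2.1).matches' + LpP p2 := by
  rcases p1 with ⟨e1, b1⟩
  rcases p2 with ⟨e2, b2⟩
  cases b1 with
  | false =>
      simp only [odot, Bool.false_eq_true, if_false, LpP, Lp, ebool, if_false,
        add_zero, add_mul, zero_mul]
      rw [add_assoc]
  | true =>
      simp only [odot, if_true, LpP, Lp, carrier_broadcast, ebool_or]
      have hb : Lp (broadcast e2).1 + ebool (broadcast e2).2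
          = (carrier e2).matches' + Lp e2 := lp_broadcast e2
      calc Lp e1 * (carrier e2).matches' + Lp (broadcast e2).1
            + (ebool b2 + ebool (broadcast e2).2)
          = Lp e1 * (carrier e2).matches'
            + (Lp (broadcast e2).1 + ebool (broadcast e2).2) + ebool b2 := by abel
        _ = Lp e1 * (carrier e2).matches' + ((carrier e2).matches' + Lp e2)
            + ebool b2 := by rw [hb]
        _ = (Lp e1 + ebool true) * (carrier e2).matches' + (Lp e2 + ebool b2) := by
              simp only [ebool, if_true, add_mul, one_mul]
              abel
end

section
/- For any pointed item e, R(•(e)) = nf_ε(|e|) ∪ R(e); in particular, for any regular expression e (no points), R(•(e)) = nf_ε(e). -/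
open PointedRE PItem

lemma bcar {α : Type} (e : PItem α) : carrier (broadcast e).1 = carrier e := by
  induction e with
  | empty => rfl
  | eps => rfl
  | ch a => rfl
  | pch a => rfl
  | plus e1 e2 ih1 ih2 => simp [broadcast, carrier, ih1, ih2]
  | cat e1 e2 ih1 ih2 =>
      by_cases h : (broadcast e1).2 <;> simp [broadcast, h, carrier, ih1, ih2]
  | star e ih => simp [broadcast, carrier, ih]

lemma b2 {α : Type} (e : PItem α) : (broadcast e).2 = (carrier e).matchEpsilon := by
  induction e with
  | empty => rfl
  | eps => rfl
  | ch a => rfl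
  | pch a => rfl
  | plus e1 e2 ih1 ih2 => simp [broadcast, carrier, RegularExpression.matchEpsilon, ih1, ih2]
  | cat e1 e2 ih1 ih2 =>
      by_cases h : (broadcast e1).2 <;>
        simp [broadcast, h, carrier, RegularExpression.matchEpsilon, ← ih1, ← ih2, h]
  | star e ih => simp [broadcast, carrier, RegularExpression.matchEpsilon]

lemma b1 {α : Type} (e : PItem α) : R (broadcast e).1 = nf (carrier e) ∪ R e := by
  induction e with
  | empty => simp [broadcast, R, carrier, nf]
  | eps => simp [broadcast, R, carrier, nf]
  | ch a => simp [broadcast, R, carrier, nf]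
  | pch a => simp [broadcast, R, carrier, nf]
  | plus e1 e2 ih1 ih2 =>
      simp only [broadcast, R, carrier, nf, ih1, ih2]
      ac_rfl
  | cat e1 e2 ih1 ih2 =>
      by_cases h : (broadcast e1).2
      · have hn : (carrier e1).matchEpsilon = true := by rw [← b2]; exact h
        simp only [broadcast, h, if_true, R, carrier, nf, hn, ih1, ih2, bcar,
          Set.image_union]
        ac_rfl
      · have hn : (carrier e1).matchEpsilon = false := by rw [← b2]; simpa using h
        simp only [broadcast, h, if_false, R, carrier, nf, hn, ih1, bcar,
          Set.image_union, Bool.false_eq_true]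
        ac_rfl
  | star e ih =>
      simp only [broadcast, R, carrier, nf, ih, bcar, Set.image_union]

lemma Rembed {α : Type} (r : RegularExpression α) : R (embed r) = ∅ := by
  induction r with
  | zero => rfl
  | epsilon => rfl
  | char a => rfl
  | plus e1 e2 ih1 ih2 => simp [embed, R, ih1, ih2]
  | comp e1 e2 ih1 ih2 => simp [embed, R, ih1, ih2]
  | star e ih => simp [embed, R, ih]

lemma carembed {α : Type} (r : RegularExpression α) : carrier (embed r) = r := by
  induction r with
  | zero => rfl
  | epsilon => rfl
  | char a => rfl
  | plus e1 e2 ih1 ih2 => simp [embed, carrier, ih1, ih2]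
  | comp e1 e2 ih1 ih2 => simp [embed, carrier, ih1, ih2]
  | star e ih => simp [embed, carrier, ih]

/-- R(•(e)) = nf_ε(|e|) ∪ R(e); in particular R(•(e)) = nf_ε(e) for pure e. -/
theorem stmt15 {α : Type} :
    (∀ e : PItem α, RP (broadcast e) = nfe (carrier e) ∪ R e) ∧
    (∀ r : RegularExpression α, RP (broadcast (embed r)) = nfe r) := by
  have main : ∀ e : PItem α, RP (broadcast e) = nfe (carrier e) ∪ R e := by
    intro e
    simp only [RP, nfe, b1, b2]
    ac_rfl
  exact ⟨main, fun r => by simp [main, Rembed, carembed]⟩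
end

section
/- For any pointed item e and symbol a: R(move(e,a)) = nf_ε(∂_a(R(e))), i.e., the read-back of the moved state equals the look-ahead normal form of the Brzozowski derivative of the read-back. -/
open PointedRE PItem

namespace PointedRE
namespace PItem

variable {α : Type}

theorem mE_mul (p q : RegularExpression α) :
    (p * q).matchEpsilon = (p.matchEpsilon && q.matchEpsilon) := rfl

theorem mE_add (p q : RegularExpression α) :
    (p + q).matchEpsilon = (p.matchEpsilon || q.matchEpsilon) := rfl

theorem mE_star (p : RegularExpression α) : (p.star).matchEpsilon = true := rfl

theorem deriv_mul [DecidableEq α] (p q : RegularExpression α) (a : α) :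
    (p * q).deriv a =
      if p.matchEpsilon then p.deriv a * q + q.deriv a else p.deriv a * q := rfl

theorem nf_mul (p q : RegularExpression α) :
    nf (p * q) =
      if p.matchEpsilon then (fun r => r * q) '' nf p ∪ nf q
      else (fun r => r * q) '' nf p := rfl

theorem nf_add (p q : RegularExpression α) : nf (p + q) = nf p ∪ nf q := rfl

theorem nf_star (p : RegularExpression α) :
    nf (p.star) = (fun r => r * p.star) '' nf p := rfl

theorem carrier_broadcast (e : PItem α) : carrier (broadcast e).1 = carrier e := by
  induction e with
  | empty => rfl
  | eps => rfl
  | ch a => rfl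
  | pch a => rfl
  | plus e1 e2 ih1 ih2 => simp [broadcast, carrier, ih1, ih2]
  | cat e1 e2 ih1 ih2 =>
      simp only [broadcast]
      split <;> simp [carrier, ih1, ih2]
  | star e ih => simp [broadcast, carrier, ih]

theorem snd_broadcast (e : PItem α) : (broadcast e).2 = (carrier e).matchEpsilon := by
  induction e with
  | empty => rfl
  | eps => rfl
  | ch a => rfl
  | pch a => rfl
  | plus e1 e2 ih1 ih2 => simp [broadcast, carrier, mE_add, ih1, ih2]
  | cat e1 e2 ih1 ih2 =>
      simp only [broadcast]
      split <;> rename_i h <;>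
        simp_all [carrier, mE_mul]
  | star e ih => simp [broadcast, carrier, mE_star]

theorem R_broadcast (e : PItem α) : R (broadcast e).1 = nf (carrier e) ∪ R e := by
  induction e with
  | empty => simp [broadcast, R, carrier, nf]
  | eps => simp [broadcast, R, carrier, nf]
  | ch a => simp [broadcast, R, carrier, nf]
  | pch a => simp [broadcast, R, carrier, nf]
  | plus e1 e2 ih1 ih2 =>
      simp only [broadcast, R, carrier, nf_add, ih1, ih2]
      ext x; simp; tauto
  | cat e1 e2 ih1 ih2 =>
      simp only [broadcast]
      split <;> rename_i h <;>
        rw [snd_broadcast] at h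
      · simp only [R, carrier_broadcast, ih1, ih2, carrier, nf_mul, h, if_true]
        rw [Set.image_union]; ext x; simp only [Set.mem_union]; tauto
      · simp only [R, carrier_broadcast, ih1, carrier, nf_mul, h, if_false,
          Bool.false_eq_true]
        rw [Set.image_union]; ext x; simp only [Set.mem_union]; tauto
  | star e ih =>
      simp only [broadcast, R, carrier_broadcast, ih, carrier, nf_star]
      rw [Set.image_union]

theorem mE_of_mem_R {e : PItem α} {r : RegularExpression α} (h : r ∈ R e) :
    r.matchEpsilon = false := by
  induction e generalizing r with
  | empty => simp [R] at h
  | eps => simp [R] at h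
  | ch a => simp [R] at h
  | pch a => simp [R] at h; subst h; rfl
  | plus e1 e2 ih1 ih2 =>
      rcases h with h | h
      · exact ih1 h
      · exact ih2 h
  | cat e1 e2 ih1 ih2 =>
      rcases h with h | h
      · obtain ⟨s, hs, rfl⟩ := h
        simp [mE_mul, ih1 hs]
      · exact ih2 h
  | star e ih =>
      obtain ⟨s, hs, rfl⟩ := h
      simp [mE_mul, ih hs]

theorem carrier_move [DecidableEq α] (a : α) (e : PItem α) :
    carrier (move a e).1 = carrier e := by
  induction e with
  | empty => rfl
  | eps => rfl
  | ch b => rfl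
  | pch b => simp only [move]; split <;> rfl
  | plus e1 e2 ih1 ih2 => simp [move, oplus, carrier, ih1, ih2]
  | cat e1 e2 ih1 ih2 =>
      simp only [move, odot]
      split <;> simp [carrier, carrier_broadcast, ih1, ih2]
  | star e ih =>
      simp only [move, ostar]
      split <;> simp [carrier, carrier_broadcast, ih]

theorem nf_deriv_of_mem_R_mul [DecidableEq α] {r : RegularExpression α}
    (h : r.matchEpsilon = false) (c : RegularExpression α) (a : α) :
    nf ((r * c).deriv a) =
      (fun x => x * c) '' nf (r.deriv a) ∪
        (if (r.deriv a).matchEpsilon then nf c else ∅) := by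
  rw [deriv_mul, h]
  simp only [Bool.false_eq_true, if_false, nf_mul]
  split <;> simp

theorem mE_deriv_mul [DecidableEq α] {r : RegularExpression α}
    (h : r.matchEpsilon = false) (c : RegularExpression α) (a : α) :
    ((r * c).deriv a).matchEpsilon = ((r.deriv a).matchEpsilon && c.matchEpsilon) := by
  rw [deriv_mul, h]
  simp [mE_mul]

theorem mE_zero : (0 : RegularExpression α).matchEpsilon = false := rfl

theorem mE_one : (1 : RegularExpression α).matchEpsilon = true := rfl

theorem move_spec [DecidableEq α] (a : α) (e : PItem α) :
    R (move a e).1 = (⋃ r ∈ R e, nf (r.deriv a)) ∧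
      ((move a e).2 = true ↔ ∃ r ∈ R e, (r.deriv a).matchEpsilon = true) := by
  induction e with
  | empty => simp [move, R]
  | eps => simp [move, R]
  | ch b => simp [move, R]
  | pch b =>
      simp only [move]
      split <;> rename_i h
      · subst h
        simp [R, RegularExpression.deriv_char_self, nf, mE_one]
      · simp [R, RegularExpression.deriv_char_of_ne h, nf, mE_zero]
  | plus e1 e2 ih1 ih2 =>
      obtain ⟨ihA1, ihB1⟩ := ih1
      obtain ⟨ihA2, ihB2⟩ := ih2
      constructor
      · simp only [move, oplus, R, ihA1, ihA2]
        ext x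
        simp only [Set.mem_union, Set.mem_iUnion]
        constructor
        · rintro (⟨r, hr, hx⟩ | ⟨r, hr, hx⟩)
          · exact ⟨r, Or.inl hr, hx⟩
          · exact ⟨r, Or.inr hr, hx⟩
        · rintro ⟨r, hr | hr, hx⟩
          · exact Or.inl ⟨r, hr, hx⟩
          · exact Or.inr ⟨r, hr, hx⟩
      · simp only [move, oplus, Bool.or_eq_true, ihB1, ihB2, R]
        constructor
        · rintro (⟨r, hr, h⟩ | ⟨r, hr, h⟩)
          · exact ⟨r, Or.inl hr, h⟩
          · exact ⟨r, Or.inr hr, h⟩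
        · rintro ⟨r, hr | hr, h⟩
          · exact Or.inl ⟨r, hr, h⟩
          · exact Or.inr ⟨r, hr, h⟩
  | cat e1 e2 ih1 ih2 =>
      obtain ⟨ihA1, ihB1⟩ := ih1
      obtain ⟨ihA2, ihB2⟩ := ih2
      have hRHSA : (⋃ r ∈ R (cat e1 e2), nf (r.deriv a)) =
          ((fun x => x * carrier e2) '' R (move a e1).1 ∪
            (if (move a e1).2 then nf (carrier e2) else ∅)) ∪ R (move a e2).1 := by
        ext x
        simp only [R, ihA1, ihA2, Set.mem_union, Set.mem_iUnion, Set.mem_image]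
        constructor
        · rintro ⟨r, ⟨s, hs, rfl⟩ | hr, hx⟩
          · rw [nf_deriv_of_mem_R_mul (mE_of_mem_R hs)] at hx
            rcases hx with ⟨y, hy, rfl⟩ | hx
            · exact Or.inl (Or.inl ⟨y, ⟨s, hs, hy⟩, rfl⟩)
            · split at hx
              · rename_i hmE
                have hb : (move a e1).2 = true := ihB1.2 ⟨s, hs, hmE⟩
                exact Or.inl (Or.inr (by simp [hb, hx]))
              · exact absurd hx (Set.notMem_empty x)
          · exact Or.inr ⟨r, hr, hx⟩
        · rintro ((⟨y, ⟨s, hs, hy⟩, rfl⟩ | hx) | ⟨r, hr, hx⟩)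
          · refine ⟨s * carrier e2, Or.inl ⟨s, hs, rfl⟩, ?_⟩
            rw [nf_deriv_of_mem_R_mul (mE_of_mem_R hs)]
            exact Or.inl ⟨y, hy, rfl⟩
          · split at hx
            · rename_i hb1
              obtain ⟨s, hs, hmE⟩ := ihB1.1 hb1
              refine ⟨s * carrier e2, Or.inl ⟨s, hs, rfl⟩, ?_⟩
              rw [nf_deriv_of_mem_R_mul (mE_of_mem_R hs)]
              exact Or.inr (by simp [hmE, hx])
            · exact absurd hx (Set.notMem_empty x)
          · exact ⟨r, Or.inr hr, hx⟩
      have hRHSB : (∃ r ∈ R (cat e1 e2), (r.deriv a).matchEpsilon = true) ↔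
          (((move a e1).2 && (carrier e2).matchEpsilon) || (move a e2).2) = true := by
        simp only [Bool.or_eq_true, Bool.and_eq_true, ihB1, ihB2, R]
        constructor
        · rintro ⟨r, hmem, hx⟩
          rcases hmem with ⟨s, hs, rfl⟩ | hr
          · rw [mE_deriv_mul (mE_of_mem_R hs)] at hx
            simp only [Bool.and_eq_true] at hx
            exact Or.inl ⟨⟨s, hs, hx.1⟩, hx.2⟩
          · exact Or.inr ⟨r, hr, hx⟩
        · rintro (⟨⟨s, hs, hmE⟩, hc⟩ | ⟨r, hr, hx⟩)
          · refine ⟨s * carrier e2, Or.inl ⟨s, hs, rfl⟩, ?_⟩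
            rw [mE_deriv_mul (mE_of_mem_R hs)]
            simp [hmE, hc]
          · exact ⟨r, Or.inr hr, hx⟩
      constructor
      · rw [hRHSA]
        simp only [move, odot]
        split <;> rename_i hb1
        · simp only [R, carrier_broadcast, carrier_move, R_broadcast, hb1, if_true]
          ext x; simp only [Set.mem_union]; tauto
        · simp only [R, carrier_move]
          rw [Bool.not_eq_true] at hb1
          simp [hb1]
      · rw [hRHSB]
        simp only [move, odot]
        split <;> rename_i hb1
        · simp only [snd_broadcast, carrier_move, hb1]
          simp [Bool.or_comm]
        · rw [Bool.not_eq_true] at hb1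
          simp [hb1]
  | star e ih =>
      obtain ⟨ihA, ihB⟩ := ih
      have hRHSA : (⋃ r ∈ R (star e), nf (r.deriv a)) =
          ((fun x => x * (carrier e).star) '' R (move a e).1 ∪
            (if (move a e).2 then nf ((carrier e).star) else ∅)) := by
        ext x
        simp only [R, ihA, Set.mem_union, Set.mem_iUnion, Set.mem_image]
        constructor
        · rintro ⟨r, ⟨s, hs, rfl⟩, hx⟩
          rw [nf_deriv_of_mem_R_mul (mE_of_mem_R hs)] at hx
          rcases hx with ⟨y, hy, rfl⟩ | hx
          · exact Or.inl ⟨y, ⟨s, hs, hy⟩, rfl⟩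
          · split at hx
            · rename_i hmE
              have hb : (move a e).2 = true := ihB.2 ⟨s, hs, hmE⟩
              exact Or.inr (by simp [hb, hx])
            · exact absurd hx (Set.notMem_empty x)
        · rintro (⟨y, ⟨s, hs, hy⟩, rfl⟩ | hx)
          · refine ⟨s * (carrier e).star, ⟨s, hs, rfl⟩, ?_⟩
            rw [nf_deriv_of_mem_R_mul (mE_of_mem_R hs)]
            exact Or.inl ⟨y, hy, rfl⟩
          · split at hx
            · rename_i hb
              obtain ⟨s, hs, hmE⟩ := ihB.1 hb
              refine ⟨s * (carrier e).star, ⟨s, hs, rfl⟩, ?_⟩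
              rw [nf_deriv_of_mem_R_mul (mE_of_mem_R hs)]
              exact Or.inr (by simp [hmE, hx])
            · exact absurd hx (Set.notMem_empty x)
      constructor
      · rw [hRHSA]
        simp only [move, ostar]
        split <;> rename_i hb
        · simp only [R, carrier_broadcast, carrier_move, R_broadcast, hb, if_true,
            nf_star]
          rw [Set.image_union, Set.union_comm]
        · rw [Bool.not_eq_true] at hb
          simp [R, carrier_move, hb]
      · simp only [move, ostar]
        split <;> rename_i hb
        · simp only [R, true_iff]
          obtain ⟨s, hs, hmE⟩ := ihB.1 hb
          refine ⟨s * (carrier e).star, ⟨s, hs, rfl⟩, ?_⟩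
          rw [mE_deriv_mul (mE_of_mem_R hs)]
          simp [hmE, mE_star]
        · rw [Bool.not_eq_true] at hb
          simp only [R, hb, Bool.false_eq_true, false_iff]
          rintro ⟨r, ⟨s, hs, rfl⟩, hx⟩
          rw [mE_deriv_mul (mE_of_mem_R hs)] at hx
          simp only [mE_star, Bool.and_true] at hx
          exact absurd (ihB.2 ⟨s, hs, hx⟩) (by simp [hb])

end PItem
end PointedRE

/-- R(move(e,a)) = nf_ε(∂_a(R(e))). -/
theorem stmt16 {α : Type} [DecidableEq α] (e : PItem α) (a : α) :
    RP (move a e) = nfeS ((fun r => r.deriv a) '' R e) := by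
  classical
  obtain ⟨hA, hB⟩ := move_spec a e
  have himg : nfeS ((fun r => r.deriv a) '' R e) = ⋃ r ∈ R e, nfe (r.deriv a) := by
    simp [nfeS, Set.biUnion_image]
  rw [RP, hA, himg]
  have : (⋃ r ∈ R e, nfe (r.deriv a)) =
      (⋃ r ∈ R e, nf (r.deriv a)) ∪
        (if ∃ r ∈ R e, (r.deriv a).matchEpsilon = true then {1} else ∅) := by
    ext x
    simp only [nfe, Set.mem_union, Set.mem_iUnion]
    constructor
    · rintro ⟨r, hr, hx | hx⟩
      · exact Or.inl ⟨r, hr, hx⟩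
      · split at hx
        · rename_i hmE
          refine Or.inr ?_
          rw [if_pos ⟨r, hr, hmE⟩]; exact hx
        · exact absurd hx (Set.notMem_empty x)
    · rintro (⟨r, hr, hx⟩ | hx)
      · exact ⟨r, hr, Or.inl hx⟩
      · split at hx
        · rename_i h
          obtain ⟨r, hr, hmE⟩ := h
          exact ⟨r, hr, Or.inr (by simp [hmE, hx])⟩
        · exact absurd hx (Set.notMem_empty x)
  rw [this]
  congr 1
  by_cases h : ∃ r ∈ R e, (r.deriv a).matchEpsilon = true
  · rw [if_pos h, if_pos (hB.2 h)]
  · rw [if_neg h, if_neg (fun hb => h (hB.1 hb))]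
end
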